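/- Let G be a group in which for all commuting pairs a, b ∈ G and all u ∈ G, b commutes with [a, u]. If G is finite, then every full balanced commutator tree of sufficiently large height evaluates to 1; in particular, G is solvable. -/

import Mathlib

def gcomm {G : Type*} [Group G] (a b : G) : G := a⁻¹ * b⁻¹ * a * b

def Bset (G : Type*) [Group G] : ℕ → Set G
  | 0 => Set.univ
  | p + 1 => {z | ∃ x ∈ Bset G p, ∃ y ∈ Bset G p, z = gcomm x y}

/-- Key lemma: a finite group in which any two conjugates of an element commute is
solvable, by strong induction on the cardinality. -/
theorem solvable_of_conj_comm : ∀ (n : ℕ) (G : Type u) [Group G] [Finite G],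
    Nat.card G ≤ n → (∀ a g : G, (g * a * g⁻¹) * a = a * (g * a * g⁻¹)) → IsSolvable G := by
  intro n
  induction n using Nat.strong_induction_on with
  | _ n ih =>
    intro G _ _ hcard hcomm
    by_cases htriv : ∀ a : G, a = 1
    · exact isSolvable_of_comm fun a b => by rw [htriv a, htriv b]
    push_neg at htriv
    obtain ⟨a, ha⟩ := htriv
    set A : Subgroup G := Subgroup.normalClosure {a} with hA
    -- any two conjugates of `a` commute
    have hconj : ∀ x ∈ Group.conjugatesOfSet ({a} : Set G),
        ∀ y ∈ Group.conjugatesOfSet ({a} : Set G), x * y = y * x := by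
      intro x hx y hy
      rcases Group.mem_conjugatesOfSet_iff.1 hx with ⟨a₁, ha₁, hcx⟩
      rcases Group.mem_conjugatesOfSet_iff.1 hy with ⟨a₂, ha₂, hcy⟩
      rw [Set.mem_singleton_iff] at ha₁ ha₂
      rw [ha₁] at hcx; rw [ha₂] at hcy
      rcases isConj_iff.1 hcx with ⟨g, rfl⟩
      rcases isConj_iff.1 hcy with ⟨h, rfl⟩
      have key := hcomm a (g⁻¹ * h)
      -- conjugate the key identity by g
      have : g * ((g⁻¹ * h) * a * (g⁻¹ * h)⁻¹ * a) * g⁻¹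
          = g * (a * ((g⁻¹ * h) * a * (g⁻¹ * h)⁻¹)) * g⁻¹ := by rw [key]
      calc g * a * g⁻¹ * (h * a * h⁻¹)
          = g * (a * ((g⁻¹ * h) * a * (g⁻¹ * h)⁻¹)) * g⁻¹ := by group
        _ = g * ((g⁻¹ * h) * a * (g⁻¹ * h)⁻¹ * a) * g⁻¹ := by rw [key]
        _ = h * a * h⁻¹ * (g * a * g⁻¹) := by group
    -- hence the normal closure of {a} is commutative
    have hAcomm : ∀ x ∈ A, ∀ y ∈ A, x * y = y * x := by
      intro x hx y hy
      rw [hA] at hx hy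
      refine Subgroup.closure_induction₂
        (p := fun x y _ _ => Commute x y)
        (fun x y hx hy => hconj x hx y hy)
        (fun x _ => Commute.one_left x) (fun x _ => Commute.one_right x)
        (fun x y z _ _ _ h1 h2 => h1.mul_left h2)
        (fun y z x _ _ _ h1 h2 => h1.mul_right h2)
        (fun x y _ _ h => h.inv_left)
        (fun x y _ _ h => h.inv_right)
        hx hy
    haveI hsolvA : IsSolvable A :=
      isSolvable_of_comm fun ⟨x, hx⟩ ⟨y, hy⟩ => Subtype.ext (hAcomm x hx y hy)
    -- the quotient is smaller
    have haA : a ∈ A := Subgroup.subset_normalClosure (by simp)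
    have hnontrivA : Nontrivial A := ⟨⟨a, haA⟩, ⟨1, one_mem A⟩, by simpa using ha⟩
    have h2 : 2 ≤ Nat.card A := Finite.one_lt_card_iff_nontrivial.2 hnontrivA
    have hposQ : 0 < Nat.card (G ⧸ A) := Nat.card_pos
    have hqlt : Nat.card (G ⧸ A) < Nat.card G := by
      have := Subgroup.card_eq_card_quotient_mul_card_subgroup A
      calc Nat.card (G ⧸ A) < Nat.card (G ⧸ A) * 2 := by omega
        _ ≤ Nat.card (G ⧸ A) * Nat.card A := Nat.mul_le_mul_left _ h2
        _ = Nat.card G := this.symm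
    -- the quotient inherits the hypothesis
    have hcommQ : ∀ x g : G ⧸ A, (g * x * g⁻¹) * x = x * (g * x * g⁻¹) := by
      intro x g
      induction x using QuotientGroup.induction_on with
      | H x =>
      induction g using QuotientGroup.induction_on with
      | H g =>
      have := congrArg (QuotientGroup.mk (s := A)) (hcomm x g)
      simpa using this
    haveI hsolvQ : IsSolvable (G ⧸ A) :=
      ih (Nat.card (G ⧸ A)) (lt_of_lt_of_le hqlt hcard) (G ⧸ A) le_rfl hcommQ
    exact solvable_of_ker_le_range A.subtype (QuotientGroup.mk' A)
      (by rw [QuotientGroup.ker_mk', Subgroup.range_subtype]) (hG' := hsolvA) (hG'' := hsolvQ)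

open scoped commutatorElement in
theorem Bset_subset_derivedSeries {G : Type*} [Group G] :
    ∀ p : ℕ, ∀ x ∈ Bset G p, x ∈ derivedSeries G p := by
  intro p
  induction p with
  | zero => intro x _; exact Subgroup.mem_top x
  | succ p ih =>
    rintro x ⟨u, hu, v, hv, rfl⟩
    have : gcomm u v = ⁅u⁻¹, v⁻¹⁆ := by
      simp [gcomm, commutatorElement_def]
    rw [this, derivedSeries_succ]
    exact Subgroup.commutator_mem_commutator
      (Subgroup.inv_mem _ (ih u hu)) (Subgroup.inv_mem _ (ih v hv))

theorem finite_centralizing_implies_solvable {G : Type*} [Group G] [Finite G]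
    (H : ∀ a b u : G, a * b = b * a → b * gcomm a u = gcomm a u * b) :
    (∃ N : ℕ, ∀ p : ℕ, N ≤ p → ∀ x ∈ Bset G p, x = 1) ∧ IsSolvable G := by
  have hconj : ∀ a g : G, (g * a * g⁻¹) * a = a * (g * a * g⁻¹) := by
    intro a g
    have hX : Commute a (gcomm a g⁻¹) := H a a g⁻¹ rfl
    have h2 : g * a * g⁻¹ = a * gcomm a g⁻¹ := by
      unfold gcomm; group
    rw [h2]
    exact ((Commute.refl a).mul_right hX).symm.eq
  haveI hsolv : IsSolvable G :=
    solvable_of_conj_comm (Nat.card G) G le_rfl hconj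
  refine ⟨?_, hsolv⟩
  obtain ⟨n, hn⟩ := hsolv.solvable
  refine ⟨n, ?_⟩
  intro p hp
  induction p, hp using Nat.le_induction with
  | base =>
    intro x hx
    have := Bset_subset_derivedSeries n x hx
    rw [hn] at this
    simpa using this
  | succ p hp ihp =>
    rintro x ⟨u, hu, v, hv, rfl⟩
    rw [ihp u hu, ihp v hv]
    simp [gcomm]
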